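/- If translates of a single brick C = ∏_j (0,c_j) tile a box Q = ∏_j (0,q_j) in R^d, then for each j, q_j/c_j is a positive integer, and the tiling can be taken to be the grid tiling. -/

import Mathlib

open MeasureTheory Real Complex

lemma ind_prod {d : ℕ} (S : Fin d → Set ℝ) (x : EuclideanSpace ℝ (Fin d)) :
    ({y : EuclideanSpace ℝ (Fin d) | ∀ j, y j ∈ S j}).indicator (fun _ => (1 : ℝ)) x
      = ∏ j, (S j).indicator (fun _ => (1 : ℝ)) (x j) := by
  by_cases h : ∀ j, x j ∈ S j
  · rw [Set.indicator_of_mem (show x ∈ {y : EuclideanSpace ℝ (Fin d) | ∀ j, y j ∈ S j} from h)]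
    rw [Finset.prod_congr rfl (fun j _ => Set.indicator_of_mem (h j) _)]
    simp
  · rw [Set.indicator_of_notMem
      (show x ∉ {y : EuclideanSpace ℝ (Fin d) | ∀ j, y j ∈ S j} from h)]
    push_neg at h
    obtain ⟨j, hj⟩ := h
    rw [eq_comm]
    exact Finset.prod_eq_zero (Finset.mem_univ j) (Set.indicator_of_notMem hj _)

lemma oneD (c : ℝ) (hc : 0 < c) (n : ℕ) (t : ℝ) (ht : ∀ m : ℕ, m ≤ n → t ≠ c * m) :
    ∑ k ∈ Finset.range n, (Set.Ioo 0 c).indicator (fun _ => (1:ℝ)) (t - c * k)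
      = (Set.Ioo 0 (c * n)).indicator (fun _ => (1:ℝ)) t := by
  induction n with
  | zero => simp
  | succ n ih =>
    rw [Finset.sum_range_succ, ih (fun m hm => ht m (Nat.le_succ_of_le hm))]
    have hne : t ≠ c * n := ht n (Nat.le_succ n)
    have hcn1 : (c * ((n : ℝ) + 1)) = c * n + c := by ring
    push_cast
    rw [hcn1]
    by_cases h1 : t ∈ Set.Ioo 0 (c * n) <;> by_cases h2 : t - c * n ∈ Set.Ioo 0 c
    · exfalso; obtain ⟨a1, a2⟩ := h1; obtain ⟨b1, b2⟩ := h2; linarith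
    · rw [Set.indicator_of_mem h1, Set.indicator_of_notMem h2,
        Set.indicator_of_mem (show t ∈ Set.Ioo 0 (c * n + c) from
          ⟨h1.1, by linarith [h1.2]⟩)]
      norm_num
    · rw [Set.indicator_of_notMem h1, Set.indicator_of_mem h2,
        Set.indicator_of_mem (show t ∈ Set.Ioo 0 (c * n + c) from
          ⟨by linarith [h2.1, mul_nonneg hc.le (Nat.cast_nonneg (α:=ℝ) n)], by linarith [h2.2]⟩)]
      ring
    · rw [Set.indicator_of_notMem h1, Set.indicator_of_notMem h2,
        Set.indicator_of_notMem]
      · ring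
      · intro hmem
        rcases lt_or_gt_of_ne hne with hlt | hgt
        · exact h1 ⟨hmem.1, hlt⟩
        · exact h2 ⟨by linarith, by linarith [hmem.2]⟩

lemma hyp_null {d : ℕ} (j : Fin d) (a : ℝ) :
    volume {x : EuclideanSpace ℝ (Fin d) | x j = a} = 0 := by
  have hmeas : MeasurableSet {x : EuclideanSpace ℝ (Fin d) | x j = a} := by
    have : Measurable fun x : EuclideanSpace ℝ (Fin d) => x j :=
      (EuclideanSpace.proj j).continuous.measurable
    exact this (measurableSet_singleton a)
  have hmp := ((EuclideanSpace.volume_preserving_symm_measurableEquiv_toLp (Fin d)).symm :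
    MeasurePreserving (MeasurableEquiv.toLp 2 (Fin d → ℝ)).symm.symm)
  rw [← hmp.measure_preimage hmeas.nullMeasurableSet]
  have hset : (MeasurableEquiv.toLp 2 (Fin d → ℝ)).symm.symm ⁻¹'
      {x : EuclideanSpace ℝ (Fin d) | x j = a}
      = Set.pi Set.univ (fun i => if i = j then {a} else Set.univ) := by
    ext x
    simp only [Set.mem_preimage, Set.mem_setOf_eq, Set.mem_pi, Set.mem_univ, true_implies]
    constructor
    · intro h i
      by_cases hi : i = j <;> simp [hi]
      · subst hi; exact h
    · intro h
      have := h j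
      simpa using this
  rw [hset, volume_pi_pi]
  exact Finset.prod_eq_zero (Finset.mem_univ j) (by simp)

lemma partB {d : ℕ} (c q : Fin d → ℝ) (hc : ∀ j, 0 < c j) (n : Fin d → ℕ)
    (hn : ∀ j, q j = c j * n j)
    (oneD : ∀ (c : ℝ), 0 < c → ∀ (n : ℕ) (t : ℝ), (∀ m : ℕ, m ≤ n → t ≠ c * m) →
      ∑ k ∈ Finset.range n, (Set.Ioo 0 c).indicator (fun _ => (1:ℝ)) (t - c * k)
        = (Set.Ioo 0 (c * n)).indicator (fun _ => (1:ℝ)) t) :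
    ∀ᵐ x : EuclideanSpace ℝ (Fin d),
        (∑ k ∈ Fintype.piFinset (fun j => Finset.range (n j)),
          ({y : EuclideanSpace ℝ (Fin d) | ∀ j, y j ∈ Set.Ioo 0 (c j)}).indicator
            (fun _ => (1 : ℝ)) (x - (show EuclideanSpace ℝ (Fin d) from WithLp.toLp 2 (fun j => c j * k j)))) =
        ({y : EuclideanSpace ℝ (Fin d) | ∀ j, y j ∈ Set.Ioo 0 (q j)}).indicator
          (fun _ => (1 : ℝ)) x := by
  have hnull : volume {x : EuclideanSpace ℝ (Fin d) |
      ∃ j, ∃ m : ℕ, m ≤ n j ∧ x j = c j * m} = 0 := by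
    refine measure_mono_null (t := ⋃ j, ⋃ m ∈ Finset.range (n j + 1),
      {x : EuclideanSpace ℝ (Fin d) | x j = c j * m}) ?_ ?_
    · rintro x ⟨j, m, hm, hx⟩
      exact Set.mem_iUnion.2 ⟨j, Set.mem_iUnion.2 ⟨m, Set.mem_iUnion.2
        ⟨Finset.mem_range.2 (Nat.lt_succ_of_le hm), hx⟩⟩⟩
    · refine measure_iUnion_null fun j => measure_iUnion_null fun m =>
        measure_iUnion_null fun _ => hyp_null j _
  filter_upwards [measure_eq_zero_iff_ae_notMem.1 hnull] with x hx
  push_neg at hx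
  have key : ∀ k ∈ Fintype.piFinset (fun j => Finset.range (n j)),
      ({y : EuclideanSpace ℝ (Fin d) | ∀ j, y j ∈ Set.Ioo 0 (c j)}).indicator
        (fun _ => (1 : ℝ)) (x - (show EuclideanSpace ℝ (Fin d) from WithLp.toLp 2 (fun j => c j * k j)))
      = ∏ j, (Set.Ioo 0 (c j)).indicator (fun _ => (1:ℝ)) (x j - c j * k j) := by
    intro k _
    rw [ind_prod]
    exact Finset.prod_congr rfl fun j _ => by
      rw [show (x - (show EuclideanSpace ℝ (Fin d) from WithLp.toLp 2 (fun j => c j * k j))) j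
        = x j - c j * k j from rfl]
  rw [Finset.sum_congr rfl key, ← Finset.prod_univ_sum
    (f := fun (j : Fin d) (k : ℕ) => (Set.Ioo 0 (c j)).indicator (fun _ => (1:ℝ)) (x j - c j * k)),
    ind_prod]
  refine Finset.prod_congr rfl fun j _ => ?_
  rw [oneD (c j) (hc j) (n j) (x j) (fun m hm => hx j m hm), ← hn j]

lemma ind_shift (C a : ℝ) (t : ℝ) :
    (Set.Ioo 0 C).indicator (fun _ => (1:ℝ)) (t - a)
      = (Set.Ioo a (a + C)).indicator (fun _ => (1:ℝ)) t := by
  by_cases h : t - a ∈ Set.Ioo 0 C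
  · rw [Set.indicator_of_mem h, Set.indicator_of_mem
      (show t ∈ Set.Ioo a (a + C) from ⟨by linarith [h.1], by linarith [h.2]⟩)]
  · rw [Set.indicator_of_notMem h, Set.indicator_of_notMem]
    intro hm; exact h ⟨by linarith [hm.1], by linarith [hm.2]⟩

lemma ind_mul_eq_indicator (C a : ℝ) (h : ℝ → ℂ) (t : ℝ) :
    (((Set.Ioo 0 C).indicator (fun _ => (1:ℝ)) (t - a) : ℝ) : ℂ) * h t
      = (Set.Ioo a (a + C)).indicator h t := by
  rw [ind_shift]
  by_cases hm : t ∈ Set.Ioo a (a + C)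
  · rw [Set.indicator_of_mem hm, Set.indicator_of_mem hm]; simp
  · rw [Set.indicator_of_notMem hm, Set.indicator_of_notMem hm]; simp

lemma intA (C a : ℝ) (hC : 0 < C) :
    ∫ t : ℝ, (((Set.Ioo 0 C).indicator (fun _ => (1:ℝ)) (t - a) : ℝ) : ℂ) = (C : ℂ) := by
  have : ∀ t : ℝ, (((Set.Ioo 0 C).indicator (fun _ => (1:ℝ)) (t - a) : ℝ) : ℂ)
      = (Set.Ioo a (a + C)).indicator (fun _ => (1:ℂ)) t := by
    intro t
    simpa using ind_mul_eq_indicator C a (fun _ => (1:ℂ)) t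
  simp_rw [this]
  rw [integral_indicator measurableSet_Ioo, setIntegral_const]
  simp [Real.volume_Ioo]
  linarith

lemma intB (C a : ℝ) (hC : 0 < C) (k : ℂ) (hk : k ≠ 0) :
    ∫ t : ℝ, (((Set.Ioo 0 C).indicator (fun _ => (1:ℝ)) (t - a) : ℝ) : ℂ)
        * Complex.exp (k * t)
      = (Complex.exp (k * (a + C)) - Complex.exp (k * a)) / k := by
  simp_rw [ind_mul_eq_indicator C a (fun t : ℝ => Complex.exp (k * t))]
  rw [integral_indicator measurableSet_Ioo, ← integral_Ioc_eq_integral_Ioo,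
    ← intervalIntegral.integral_of_le (by linarith : a ≤ a + C),
    integral_exp_mul_complex hk]
  norm_num

-- integrability of the 1-d pieces
lemma integrable1 (C a : ℝ) (k : ℂ) :
    Integrable (fun t : ℝ => (((Set.Ioo 0 C).indicator (fun _ => (1:ℝ)) (t - a) : ℝ) : ℂ)
      * Complex.exp (k * t)) := by
  simp_rw [ind_mul_eq_indicator C a (fun t : ℝ => Complex.exp (k * t))]
  rw [integrable_indicator_iff measurableSet_Ioo]
  have hcont : Continuous (fun t : ℝ => Complex.exp (k * t)) :=
    Complex.continuous_exp.comp (continuous_const.mul Complex.continuous_ofReal)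
  exact (hcont.integrableOn_Icc (a := a) (b := a + C)).mono_set Set.Ioo_subset_Icc_self

lemma integrable2 (C a : ℝ) :
    Integrable (fun t : ℝ => (((Set.Ioo 0 C).indicator (fun _ => (1:ℝ)) (t - a) : ℝ) : ℂ)) := by
  have : ∀ t : ℝ, (((Set.Ioo 0 C).indicator (fun _ => (1:ℝ)) (t - a) : ℝ) : ℂ)
      = (Set.Ioo a (a + C)).indicator (fun _ => (1:ℂ)) t := by
    intro t
    simpa using ind_mul_eq_indicator C a (fun _ => (1:ℂ)) t
  simp_rw [this]
  rw [integrable_indicator_iff measurableSet_Ioo]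
  exact integrableOn_const (by rw [Real.volume_Ioo]; exact ENNReal.ofReal_ne_top)

lemma euclid_integral_prod {d : ℕ} (f : Fin d → ℝ → ℂ) :
    ∫ x : EuclideanSpace ℝ (Fin d), ∏ i, f i (x i) = ∏ i, ∫ t : ℝ, f i t := by
  have hmp := ((EuclideanSpace.volume_preserving_symm_measurableEquiv_toLp (Fin d)).symm :
    MeasurePreserving (MeasurableEquiv.toLp 2 (Fin d → ℝ)).symm.symm)
  rw [← hmp.integral_comp (MeasurableEquiv.measurableEmbedding _)
    (fun x : EuclideanSpace ℝ (Fin d) => ∏ i, f i (x i))]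
  exact MeasureTheory.integral_fintype_prod_eq_prod (ι := Fin d) f

lemma euclid_integrable_prod {d : ℕ} (f : Fin d → ℝ → ℂ) (hf : ∀ i, Integrable (f i)) :
    Integrable (fun x : EuclideanSpace ℝ (Fin d) => ∏ i, f i (x i)) := by
  have hmp := ((EuclideanSpace.volume_preserving_symm_measurableEquiv_toLp (Fin d)).symm :
    MeasurePreserving (MeasurableEquiv.toLp 2 (Fin d → ℝ)).symm.symm)
  rw [← hmp.integrable_comp_emb (MeasurableEquiv.measurableEmbedding _)]
  exact MeasureTheory.Integrable.fintype_prod hf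

lemma partA {d : ℕ} (c q : Fin d → ℝ) (hc : ∀ j, 0 < c j) (hq : ∀ j, 0 < q j)
    (Λ : Finset (EuclideanSpace ℝ (Fin d)))
    (htile : ∀ᵐ x : EuclideanSpace ℝ (Fin d),
      (∑ l ∈ Λ, ({y : EuclideanSpace ℝ (Fin d) | ∀ j, y j ∈ Set.Ioo 0 (c j)}).indicator
          (fun _ => (1 : ℝ)) (x - l)) =
      ({y : EuclideanSpace ℝ (Fin d) | ∀ j, y j ∈ Set.Ioo 0 (q j)}).indicator
        (fun _ => (1 : ℝ)) x) (j : Fin d) :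
    ∃ n : ℕ, 0 < n ∧ q j = c j * n := by
  set k : ℂ := 2 * π * Complex.I / (c j) with hkdef
  have hcj : ((c j : ℝ) : ℂ) ≠ 0 := by exact_mod_cast (hc j).ne'
  have h2pi : (2 * (π : ℂ) * Complex.I) ≠ 0 := by
    simp [Real.pi_ne_zero, Complex.I_ne_zero, Complex.ofReal_ne_zero]
  have hk : k ≠ 0 := div_ne_zero h2pi hcj
  have hkc : k * (c j : ℝ) = 2 * π * Complex.I := by
    rw [hkdef]; field_simp
  set g : ℝ → ℂ := fun t => Complex.exp (k * t) with hgdef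
  set fC : EuclideanSpace ℝ (Fin d) → Fin d → ℝ → ℂ := fun l i t =>
    (((Set.Ioo 0 (c i)).indicator (fun _ => (1:ℝ)) (t - l i) : ℝ) : ℂ)
      * (if i = j then g t else 1) with hfCdef
  set fQ : Fin d → ℝ → ℂ := fun i t =>
    (((Set.Ioo 0 (q i)).indicator (fun _ => (1:ℝ)) (t - 0) : ℝ) : ℂ)
      * (if i = j then g t else 1) with hfQdef
  -- pointwise factorizations
  have hfactC : ∀ (l x : EuclideanSpace ℝ (Fin d)),
      (((({y : EuclideanSpace ℝ (Fin d) | ∀ i, y i ∈ Set.Ioo 0 (c i)}).indicator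
        (fun _ => (1 : ℝ)) (x - l)) : ℝ) : ℂ) * g (x j) = ∏ i, fC l i (x i) := by
    intro l x
    have h1 : (({y : EuclideanSpace ℝ (Fin d) | ∀ i, y i ∈ Set.Ioo 0 (c i)}).indicator
        (fun _ => (1 : ℝ)) (x - l)) = ∏ i, (Set.Ioo 0 (c i)).indicator (fun _ => (1:ℝ))
          (x i - l i) := ind_prod _ _
    have h2 : ∏ i, (if i = j then g (x i) else 1) = g (x j) := by simp
    rw [h1, Complex.ofReal_prod, ← h2, ← Finset.prod_mul_distrib]
  have hfactQ : ∀ (x : EuclideanSpace ℝ (Fin d)),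
      (((({y : EuclideanSpace ℝ (Fin d) | ∀ i, y i ∈ Set.Ioo 0 (q i)}).indicator
        (fun _ => (1 : ℝ)) x) : ℝ) : ℂ) * g (x j) = ∏ i, fQ i (x i) := by
    intro x
    have h1 : (({y : EuclideanSpace ℝ (Fin d) | ∀ i, y i ∈ Set.Ioo 0 (q i)}).indicator
        (fun _ => (1 : ℝ)) x) = ∏ i, (Set.Ioo 0 (q i)).indicator (fun _ => (1:ℝ))
          (x i - 0) := by
      rw [ind_prod]; simp only [sub_zero]
    have h2 : ∏ i, (if i = j then g (x i) else 1) = g (x j) := by simp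
    rw [h1, Complex.ofReal_prod, ← h2, ← Finset.prod_mul_distrib]
  -- a.e. identity after multiplying by g (x j)
  have hae : ∀ᵐ x : EuclideanSpace ℝ (Fin d),
      ∑ l ∈ Λ, ∏ i, fC l i (x i) = ∏ i, fQ i (x i) := by
    filter_upwards [htile] with x hx
    have : ∑ l ∈ Λ, ∏ i, fC l i (x i)
        = (((∑ l ∈ Λ, ({y : EuclideanSpace ℝ (Fin d) | ∀ i, y i ∈ Set.Ioo 0 (c i)}).indicator
            (fun _ => (1 : ℝ)) (x - l)) : ℝ) : ℂ) * g (x j) := by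
      rw [Complex.ofReal_sum, Finset.sum_mul]
      exact Finset.sum_congr rfl fun l _ => (hfactC l x).symm
    rw [this, hx, hfactQ]
  -- integrability
  have hintC : ∀ l : EuclideanSpace ℝ (Fin d),
      Integrable (fun x : EuclideanSpace ℝ (Fin d) => ∏ i, fC l i (x i)) := by
    intro l
    refine euclid_integrable_prod _ fun i => ?_
    by_cases hij : i = j
    · subst hij
      simpa [hfCdef, hgdef] using integrable1 (c i) (l i) k
    · simpa [hfCdef, hij] using integrable2 (c i) (l i)
  -- each translate integral vanishes
  have hzero : ∀ l : EuclideanSpace ℝ (Fin d),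
      ∫ x : EuclideanSpace ℝ (Fin d), ∏ i, fC l i (x i) = 0 := by
    intro l
    rw [euclid_integral_prod]
    refine Finset.prod_eq_zero (Finset.mem_univ j) ?_
    have : ∫ t : ℝ, fC l j t
        = (Complex.exp (k * ((l j) + c j)) - Complex.exp (k * (l j))) / k := by
      simp only [hfCdef, if_pos rfl, hgdef]
      rw [← intB (c j) (l j) (hc j) k hk]
      norm_num
    rw [this]
    have hexp : Complex.exp (k * ((l j : ℝ) + (c j : ℝ)))
        = Complex.exp (k * (l j : ℝ)) := by
      have : k * ((l j : ℝ) + (c j : ℝ)) = k * (l j : ℝ) + 2 * π * Complex.I := by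
        push_cast
        rw [mul_add, hkc]
      rw [this, Complex.exp_add, Complex.exp_two_pi_mul_I, mul_one]
    rw [hexp, sub_self, zero_div]
  -- integral of box side
  have hQint : ∫ x : EuclideanSpace ℝ (Fin d), ∏ i, fQ i (x i) = 0 := by
    rw [integral_congr_ae (Filter.EventuallyEq.symm hae), integral_finset_sum Λ
      (fun l _ => hintC l)]
    exact Finset.sum_eq_zero fun l _ => hzero l
  rw [euclid_integral_prod] at hQint
  -- identify factors
  have hfac : ∀ i : Fin d, ∫ t : ℝ, fQ i t
      = if i = j then (Complex.exp (k * (q j)) - 1) / k else ((q i : ℝ) : ℂ) := by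
    intro i
    by_cases hij : i = j
    · subst hij
      rw [if_pos rfl]
      have hEq : ∀ t : ℝ, fQ i t = (((Set.Ioo 0 (q i)).indicator (fun _ => (1:ℝ)) (t - 0) : ℝ) : ℂ)
          * Complex.exp (k * t) := by
        intro t; simp [hfQdef, hgdef]
      simp_rw [hEq]
      rw [intB (q i) 0 (hq i) k hk]
      norm_num
    · rw [if_neg hij]
      have hEq : ∀ t : ℝ, fQ i t
          = (((Set.Ioo 0 (q i)).indicator (fun _ => (1:ℝ)) (t - 0) : ℝ) : ℂ) := by
        intro t; simp [hfQdef, hij]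
      simp_rw [hEq]
      exact intA (q i) 0 (hq i)
  rw [Finset.prod_congr rfl (fun i _ => hfac i)] at hQint
  rw [Finset.prod_eq_zero_iff] at hQint
  obtain ⟨i, _, hi⟩ := hQint
  by_cases hij : i = j
  · subst hij
    rw [if_pos rfl, div_eq_zero_iff] at hi
    have hexp1 : Complex.exp (k * (q i)) = 1 := by
      rcases hi with h | h
      · exact sub_eq_zero.1 h
      · exact absurd h hk
    rw [Complex.exp_eq_one_iff] at hexp1
    obtain ⟨m, hm⟩ := hexp1
    have h3 : (2 * π * Complex.I) * ((q i : ℝ) : ℂ)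
        = (2 * π * Complex.I) * ((m : ℂ) * ((c i : ℝ) : ℂ)) := by
      calc (2 * π * Complex.I) * ((q i : ℝ) : ℂ)
          = (k * ((c i : ℝ) : ℂ)) * ((q i : ℝ) : ℂ) := by rw [hkc]
        _ = (k * ((q i : ℝ) : ℂ)) * ((c i : ℝ) : ℂ) := by ring
        _ = ((m : ℂ) * (2 * π * Complex.I)) * ((c i : ℝ) : ℂ) := by rw [hm]
        _ = (2 * π * Complex.I) * ((m : ℂ) * ((c i : ℝ) : ℂ)) := by ring
    have hq_eq : ((q i : ℝ) : ℂ) = (m : ℂ) * ((c i : ℝ) : ℂ) := mul_left_cancel₀ h2pi h3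
    have hq_real : q i = (m : ℝ) * c i := by exact_mod_cast hq_eq
    have hmpos : 0 < m := by
      by_contra hneg
      push_neg at hneg
      have : (m : ℝ) ≤ 0 := by exact_mod_cast hneg
      nlinarith [hq i, hc i]
    refine ⟨m.toNat, by omega, ?_⟩
    rw [hq_real]
    have hcast : ((m.toNat : ℕ) : ℝ) = (m : ℝ) := by
      exact_mod_cast Int.toNat_of_nonneg hmpos.le
    rw [hcast]
    ring
  · rw [if_neg hij] at hi
    exact absurd hi (by exact_mod_cast (hq i).ne')

/-- If translates of the single brick `C = ∏ (0, c j)` tile the box `Q = ∏ (0, q j)`,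
then each `q j / c j` is a positive integer, and the grid tiling also tiles `Q`. -/
theorem single_brick_tiles_box (d : ℕ) (hd : 1 ≤ d)
    (c q : Fin d → ℝ) (hc : ∀ j, 0 < c j) (hq : ∀ j, 0 < q j)
    (Λ : Finset (EuclideanSpace ℝ (Fin d)))
    (htile : ∀ᵐ x : EuclideanSpace ℝ (Fin d),
      (∑ l ∈ Λ, ({y : EuclideanSpace ℝ (Fin d) | ∀ j, y j ∈ Set.Ioo 0 (c j)}).indicator
          (fun _ => (1 : ℝ)) (x - l)) =
      ({y : EuclideanSpace ℝ (Fin d) | ∀ j, y j ∈ Set.Ioo 0 (q j)}).indicator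
        (fun _ => (1 : ℝ)) x) :
    ∃ n : Fin d → ℕ,
      (∀ j, 0 < n j ∧ q j = c j * n j) ∧
      ∀ᵐ x : EuclideanSpace ℝ (Fin d),
        (∑ k ∈ Fintype.piFinset (fun j => Finset.range (n j)),
          ({y : EuclideanSpace ℝ (Fin d) | ∀ j, y j ∈ Set.Ioo 0 (c j)}).indicator
            (fun _ => (1 : ℝ)) (x - (show EuclideanSpace ℝ (Fin d) from WithLp.toLp 2 (fun j => c j * k j)))) =
        ({y : EuclideanSpace ℝ (Fin d) | ∀ j, y j ∈ Set.Ioo 0 (q j)}).indicator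
          (fun _ => (1 : ℝ)) x := by
  choose n hn1 hn2 using fun j => partA c q hc hq Λ htile j
  exact ⟨n, fun j => ⟨hn1 j, hn2 j⟩, partB c q hc n hn2 oneD⟩
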